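/- Let f : [0,∞) → [0,∞) be continuous and non-decreasing, and let (x_N)_{N∈ℕ} be a sequence in [0,1) having f-pair correlations. For each N, assume the points x_1,…,x_N are sorted and let d_N > 0 be one of the circular gap lengths of x_1,…,x_N, with l_N := the number of indices i ∈ {1,…,N} whose circular gap to the successor equals d_N (with x_{N+1} := x_1). If there is a constant U < ∞ with 0 < N·d_N ≤ U for all N, then lim_{N→∞} l_N/N = 0. -/

import Mathlib

open Filter Set Asymptotics

/-- `nid x` is the distance from `x` to the nearest integer. -/
noncomputable def nid (x : ℝ) : ℝ := |x - round x|

/-- `pairCount x s N` is the pair counting function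
`R(s,N) = #{(i,j) : 1 ≤ i ≠ j ≤ N, ‖x i - x j‖ ≤ s/N}`. -/
noncomputable def pairCount (x : ℕ → ℝ) (s : ℝ) (N : ℕ) : ℕ :=
  {p : ℕ × ℕ | 1 ≤ p.1 ∧ p.1 ≤ N ∧ 1 ≤ p.2 ∧ p.2 ≤ N ∧ p.1 ≠ p.2 ∧
      nid (x p.1 - x p.2) ≤ s / N}.ncard

/-- The sequence `x` has `f`-pair correlations:
`R(s,N)/N → f s` for every `s ≥ 0`. -/
def HasPairCorr (x : ℕ → ℝ) (f : ℝ → ℝ) : Prop :=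
  ∀ s : ℝ, 0 ≤ s →
    Tendsto (fun N : ℕ => (pairCount x s N : ℝ) / N) atTop (nhds (f s))

/-- The circular gap of a (sorted) tuple `y : Fin N → ℝ` at position `i`:
`y (i+1) - y i` for `i < N - 1`, and the wrap-around gap `1 - y (N-1) + y 0` at the
last position. -/
noncomputable def circGap {N : ℕ} (y : Fin N → ℝ) (i : Fin N) : ℝ :=
  if h : (i : ℕ) + 1 < N then y ⟨(i : ℕ) + 1, h⟩ - y i else 1 - y i + y ⟨0, i.pos⟩



lemma nid_of (g : ℝ) (h0 : 0 ≤ g) (h2 : g < 1/2) : nid g = g := by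
  have : round g = 0 := by
    rw [round_eq, Int.floor_eq_iff] <;> norm_num <;> constructor <;> linarith
  simp [nid, this, abs_of_nonneg h0]

lemma nid_neg_of (g : ℝ) (h0 : 0 ≤ g) (h2 : g < 1/2) : nid (-g) = g := by
  rcases eq_or_lt_of_le h0 with h|h
  · simp [← h, nid_of]
  have : round (-g) = 0 := by
    rw [round_eq, Int.floor_eq_iff] <;> norm_num <;> constructor <;> linarith
  simp [nid, this, abs_of_nonpos, h0]

lemma nid_sub_one (g : ℝ) (h0 : 0 ≤ g) (h2 : g < 1/2) : nid (g - 1) = g := by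
  have : round (g - 1) = -1 := by
    rw [round_eq, Int.floor_eq_iff] <;> push_cast <;> constructor <;> linarith
  rw [nid, this]
  rw [show g - 1 - (-1 : ℤ) = g by push_cast; ring, abs_of_nonneg h0]

lemma nid_one_sub (g : ℝ) (h0 : 0 ≤ g) (h2 : g < 1/2) : nid (1 - g) = g := by
  have : round (1 - g) = 1 := by
    rw [round_eq, Int.floor_eq_iff] <;> push_cast <;> constructor <;> linarith
  rw [nid, this]
  rw [show 1 - g - (1 : ℤ) = -g by push_cast; ring, abs_neg, abs_of_nonneg h0]

open Classical in
noncomputable def pairFinset (x : ℕ → ℝ) (s : ℝ) (N : ℕ) : Finset (ℕ × ℕ) :=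
  (Finset.Icc 1 N ×ˢ Finset.Icc 1 N).filter
    (fun p => p.1 ≠ p.2 ∧ nid (x p.1 - x p.2) ≤ s / N)

lemma pairCount_eq (x : ℕ → ℝ) (s : ℝ) (N : ℕ) :
    pairCount x s N = (pairFinset x s N).card := by
  rw [pairCount, ← Set.ncard_coe_finset]
  congr 1
  ext p
  simp only [pairFinset, Finset.coe_filter, Finset.mem_product, Finset.mem_Icc,
    Set.mem_setOf_eq]
  tauto

lemma key_count (x : ℕ → ℝ) (N : ℕ) (hN : 3 ≤ N) (σ : Equiv.Perm (Fin N))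
    (dN s1 s2 : ℝ) (hd0 : 0 < dN) (hdh : dN < 1/2)
    (hs1 : s1 / N < dN) (hs2 : dN ≤ s2 / N) :
    pairCount x s1 N +
      2 * (Finset.univ.filter
        (fun i : Fin N => circGap (fun j : Fin N => x ((σ j : ℕ) + 1)) i = dN)).card
      ≤ pairCount x s2 N := by
  classical
  have hNpos : 0 < N := by omega
  haveI : NeZero N := ⟨by omega⟩
  set q : Fin N → ℕ := fun j => (σ j : ℕ) + 1 with hq
  have hqinj : Function.Injective q := by
    intro a b hab
    have hab' : (σ a : ℕ) + 1 = (σ b : ℕ) + 1 := hab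
    exact σ.injective (Fin.ext (by omega))
  set y : Fin N → ℝ := fun j => x (q j) with hy
  set G : Finset (Fin N) := Finset.univ.filter (fun i => circGap y i = dN) with hG
  -- successor: Fin addition
  have hsucc : ∀ i : Fin N, (if h : (i : ℕ) + 1 < N then (⟨(i:ℕ)+1, h⟩ : Fin N)
      else ⟨0, i.pos⟩) = i + 1 := by
    intro i
    split_ifs with h
    · apply Fin.ext
      simp [Fin.add_def, Nat.mod_eq_of_lt h]
    · have : (i : ℕ) + 1 = N := by have := i.isLt; omega
      apply Fin.ext
      simp [Fin.add_def, this]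
  have hone : (1 : Fin N).val = 1 := by
    rw [Fin.val_one']; exact Nat.mod_eq_of_lt (by omega)
  have htwo : ((1 : Fin N) + 1).val = 2 := by
    rw [Fin.add_def, hone]; exact Nat.mod_eq_of_lt (by omega)
  have hne_succ : ∀ i : Fin N, i ≠ i + 1 := by
    intro i h
    have h2 : i + 0 = i + 1 := by rw [add_zero]; exact h
    have h3 := congrArg Fin.val (add_left_cancel h2)
    rw [Fin.val_zero, hone] at h3
    omega
  have hne_succ2 : ∀ i : Fin N, i ≠ i + 1 + 1 := by
    intro i h
    have h2 : i + 0 = i + (1 + 1) := by rw [add_zero, ← add_assoc]; exact h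
    have h3 := congrArg Fin.val (add_left_cancel h2)
    rw [Fin.val_zero, htwo] at h3
    omega
  -- nid values at gap positions
  have hgap : ∀ i ∈ G, nid (x (q i) - x (q (i+1))) = dN ∧
      nid (x (q (i+1)) - x (q i)) = dN := by
    intro i hi
    have hci : circGap y i = dN := by simpa [hG] using hi
    rw [circGap] at hci
    by_cases h : (i : ℕ) + 1 < N
    · rw [dif_pos h] at hci
      have e : (⟨(i:ℕ)+1, h⟩ : Fin N) = i + 1 := by rw [← hsucc i, dif_pos h]
      rw [e] at hci
      have h1 : x (q (i+1)) - x (q i) = dN := hci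
      have h2 : x (q i) - x (q (i+1)) = -dN := by rw [← h1]; ring
      rw [h1, h2, nid_neg_of dN hd0.le hdh, nid_of dN hd0.le hdh]
      exact ⟨rfl, rfl⟩
    · rw [dif_neg h] at hci
      have e : (⟨0, i.pos⟩ : Fin N) = i + 1 := by rw [← hsucc i, dif_neg h]
      rw [e] at hci
      -- 1 - y i + y (i+1) = dN
      have h1 : x (q (i+1)) - x (q i) = dN - 1 := by
        have : 1 - y i + y (i+1) = dN := hci
        simp only [hy] at this; linarith
      have h2 : x (q i) - x (q (i+1)) = 1 - dN := by linarith
      rw [h1, h2, nid_one_sub dN hd0.le hdh, nid_sub_one dN hd0.le hdh]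
      exact ⟨rfl, rfl⟩
  have hqmem : ∀ i : Fin N, 1 ≤ q i ∧ q i ≤ N := by
    intro i
    have hlt := (σ i).isLt
    refine ⟨?_, ?_⟩ <;> simp only [hq] <;> omega
  -- the two image sets
  set B1 : Finset (ℕ × ℕ) := G.image (fun i => (q i, q (i+1))) with hB1
  set B2 : Finset (ℕ × ℕ) := G.image (fun i => (q (i+1), q i)) with hB2
  have hqsinj : Function.Injective (fun i : Fin N => (q i, q (i+1))) := by
    intro a b hab
    exact hqinj (congrArg Prod.fst hab)
  have hqsinj2 : Function.Injective (fun i : Fin N => (q (i+1), q i)) := by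
    intro a b hab
    exact hqinj (congrArg Prod.snd hab)
  have hcard1 : B1.card = G.card := Finset.card_image_of_injective _ hqsinj
  have hcard2 : B2.card = G.card := Finset.card_image_of_injective _ hqsinj2
  have hdisj12 : Disjoint B1 B2 := by
    rw [Finset.disjoint_left]
    rintro p hp1 hp2
    simp only [hB1, hB2, Finset.mem_image] at hp1 hp2
    obtain ⟨a, _, ha⟩ := hp1
    obtain ⟨b, _, hb⟩ := hp2
    rw [← hb] at ha
    have e1 : q a = q (b+1) := congrArg Prod.fst ha
    have e2 : q (a+1) = q b := congrArg Prod.snd ha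
    have e1' : a = b + 1 := hqinj e1
    have e2' : a + 1 = b := hqinj e2
    rw [← e2'] at e1'
    exact hne_succ2 a e1'
  -- membership in pairFinset s2 minus pairFinset s1
  have hmem : ∀ p ∈ B1 ∪ B2, p ∈ pairFinset x s2 N ∧ p ∉ pairFinset x s1 N := by
    intro p hp
    have hex : ∃ i ∈ G, p = (q i, q (i+1)) ∨ p = (q (i+1), q i) := by
      rcases Finset.mem_union.mp hp with h | h
      · simp only [hB1, Finset.mem_image] at h
        obtain ⟨a, ha, hae⟩ := h
        exact ⟨a, ha, Or.inl hae.symm⟩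
      · simp only [hB2, Finset.mem_image] at h
        obtain ⟨a, ha, hae⟩ := h
        exact ⟨a, ha, Or.inr hae.symm⟩
    obtain ⟨i, hi, hcases⟩ := hex
    have hg := hgap i hi
    have hm1 := hqmem i
    have hm2 := hqmem (i+1)
    have hne : q i ≠ q (i+1) := fun h => hne_succ i (hqinj h)
    have hnid : nid (x p.1 - x p.2) = dN := by
      rcases hcases with h | h <;> subst h
      · exact hg.1
      · exact hg.2
    have hpmem : p.1 ∈ Finset.Icc 1 N ∧ p.2 ∈ Finset.Icc 1 N := by
      rcases hcases with h | h <;> subst h <;>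
        simp [Finset.mem_Icc, hm1, hm2]
    have hpne : p.1 ≠ p.2 := by
      rcases hcases with h | h <;> subst h
      · exact hne
      · exact hne.symm
    constructor
    · simp only [pairFinset, Finset.mem_filter, Finset.mem_product]
      exact ⟨⟨hpmem.1, hpmem.2⟩, hpne, by rw [hnid]; exact hs2⟩
    · simp only [pairFinset, Finset.mem_filter, Finset.mem_product]
      rintro ⟨-, -, hle⟩
      rw [hnid] at hle
      linarith
  have hsub : pairFinset x s1 N ∪ (B1 ∪ B2) ⊆ pairFinset x s2 N := by
    intro p hp
    rcases Finset.mem_union.mp hp with h | h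
    · simp only [pairFinset, Finset.mem_filter, Finset.mem_product] at h ⊢
      refine ⟨h.1, h.2.1, le_trans h.2.2 ?_⟩
      have : s1 / N ≤ s2 / N := le_trans hs1.le hs2
      exact this
    · exact (hmem p h).1
  have hdisjB : Disjoint (pairFinset x s1 N) (B1 ∪ B2) := by
    rw [Finset.disjoint_right]
    intro p hp
    exact (hmem p hp).2
  calc pairCount x s1 N + 2 * G.card
      = (pairFinset x s1 N).card + (B1.card + B2.card) := by
        rw [pairCount_eq, hcard1, hcard2]; ring
    _ = (pairFinset x s1 N).card + (B1 ∪ B2).card := by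
        rw [Finset.card_union_of_disjoint hdisj12]
    _ = (pairFinset x s1 N ∪ (B1 ∪ B2)).card := by
        rw [Finset.card_union_of_disjoint hdisjB]
    _ ≤ (pairFinset x s2 N).card := Finset.card_le_card hsub
    _ = pairCount x s2 N := (pairCount_eq x s2 N).symm

theorem statement8 (f : ℝ → ℝ) (hf_nonneg : ∀ s : ℝ, 0 ≤ s → 0 ≤ f s)
    (hf_cont : ContinuousOn f (Ici 0)) (hf_mono : MonotoneOn f (Ici 0))
    (x : ℕ → ℝ) (hx : ∀ n, x n ∈ Ico (0 : ℝ) 1) (hpc : HasPairCorr x f)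
    (σ : ∀ N : ℕ, Equiv.Perm (Fin N))
    (hsort : ∀ N : ℕ, Monotone (fun i : Fin N => x ((σ N i : ℕ) + 1)))
    (d : ℕ → ℝ) (hd_pos : ∀ N, 0 < d N)
    (hd_gap : ∀ N, 1 ≤ N →
      ∃ i : Fin N, circGap (fun j : Fin N => x ((σ N j : ℕ) + 1)) i = d N)
    (l : ℕ → ℕ)
    (hl : ∀ N, l N = (Finset.univ.filter
      fun i : Fin N => circGap (fun j : Fin N => x ((σ N j : ℕ) + 1)) i = d N).card)
    (U : ℝ) (hU : ∀ N : ℕ, 1 ≤ N → 0 < (N : ℝ) * d N ∧ (N : ℝ) * d N ≤ U) :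
    Tendsto (fun N : ℕ => (l N : ℝ) / N) atTop (nhds 0) := by
  by_contra hcon
  -- extract ε and a subsequence with l N / N ≥ ε
  have hfreq : ∃ ε > (0:ℝ), ∃ᶠ N in atTop, ε ≤ (l N : ℝ) / N := by
    by_contra h2
    push_neg at h2
    apply hcon
    rw [Metric.tendsto_atTop]
    intro ε hε
    have h3 : ∀ᶠ N in atTop, (l N : ℝ) / N < ε := by
      have h4 := h2 ε hε
      exact h4
    obtain ⟨N₀, hN₀⟩ := h3.exists_forall_of_atTop
    refine ⟨N₀, fun n hn => ?_⟩
    rw [Real.dist_eq, sub_zero, abs_of_nonneg (by positivity)]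
    exact hN₀ n hn
  obtain ⟨ε, hε, hfr⟩ := hfreq
  obtain ⟨φ, hφmono, hφprop⟩ := Filter.extraction_of_frequently_atTop hfr
  have hU0 : 0 < U := by
    have h1 := hU 1 le_rfl
    simp only [Nat.cast_one, one_mul] at h1
    linarith
  -- Bolzano–Weierstrass on the bounded sequence (φ n) * d (φ n)
  have hmem : ∀ n, (φ n : ℝ) * d (φ n) ∈ Icc (0:ℝ) U := by
    intro n
    rcases Nat.eq_zero_or_pos (φ n) with h | h
    · simp [h]; exact hU0.le
    · exact ⟨(hU (φ n) h).1.le, (hU (φ n) h).2⟩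
  obtain ⟨t, htmem, φ₂, hφ₂mono, hut⟩ :=
    tendsto_subseq_of_bounded (Metric.isBounded_Icc (0:ℝ) U) hmem
  rw [isClosed_Icc.closure_eq] at htmem
  obtain ⟨ht0, htU⟩ := htmem
  set ψ : ℕ → ℕ := φ ∘ φ₂ with hψ
  have hψmono : StrictMono ψ := hφmono.comp hφ₂mono
  have hψtop : Tendsto ψ atTop atTop := hψmono.tendsto_atTop
  have hψcast : Tendsto (fun n => (ψ n : ℝ)) atTop atTop :=
    tendsto_natCast_atTop_atTop.comp hψtop
  have ut : Tendsto (fun n => (ψ n : ℝ) * d (ψ n)) atTop (nhds t) := hut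
  have hεψ : ∀ n, ε ≤ (l (ψ n) : ℝ) / (ψ n) := fun n => hφprop (φ₂ n)
  -- key claim
  have hge : ∀ δ : ℝ, 0 < δ → 2 * ε ≤ f (t + δ) - f (max (t - δ) 0) := by
    intro δ hδ
    set s1 := max (t - δ) 0 with hs1def
    set s2 := t + δ with hs2def
    have hs1nn : (0:ℝ) ≤ s1 := le_max_right _ _
    have hs2nn : (0:ℝ) ≤ s2 := by simp only [hs2def]; linarith
    have h2 : Tendsto (fun n => (pairCount x s2 (ψ n) : ℝ) / (ψ n)) atTop (nhds (f s2)) :=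
      (hpc s2 hs2nn).comp hψtop
    have h1 : Tendsto (fun n => (pairCount x s1 (ψ n) : ℝ) / (ψ n)) atTop (nhds (f s1)) :=
      (hpc s1 hs1nn).comp hψtop
    have hdiff := h2.sub h1
    refine ge_of_tendsto hdiff ?_
    have E1 : ∀ᶠ n in atTop, 3 ≤ ψ n := hψtop.eventually_ge_atTop 3
    have E2 : ∀ᶠ n in atTop, 2 * U < (ψ n : ℝ) := hψcast.eventually_gt_atTop (2 * U)
    have E3 : ∀ᶠ n in atTop, t - δ < (ψ n : ℝ) * d (ψ n) :=
      ut.eventually (eventually_gt_nhds (by linarith))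
    have E4 : ∀ᶠ n in atTop, (ψ n : ℝ) * d (ψ n) < t + δ :=
      ut.eventually (eventually_lt_nhds (by linarith))
    filter_upwards [E1, E2, E3, E4] with n h3 h2U hlt hub
    set N := ψ n with hNdef
    have hN1 : 1 ≤ N := by omega
    have hNpos : (0:ℝ) < N := by exact_mod_cast Nat.lt_of_lt_of_le (by norm_num) h3
    have hNd := hU N hN1
    have hdh : d N < 1/2 := by nlinarith [hNd.1, hNd.2]
    have hs1lt : s1 < (N:ℝ) * d N := max_lt hlt hNd.1
    have hs1' : s1 / N < d N := by
      rw [div_lt_iff₀ hNpos]; linarith [hs1lt]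
    have hs2' : d N ≤ s2 / N := by
      rw [le_div_iff₀ hNpos]; linarith [hub]
    have key := key_count x N h3 (σ N) (d N) s1 s2 (hd_pos N) hdh hs1' hs2'
    rw [← hl N] at key
    have hcast : (pairCount x s1 N : ℝ) + 2 * l N ≤ pairCount x s2 N := by
      exact_mod_cast key
    have hεn : ε ≤ (l N : ℝ) / N := hεψ n
    have hstep : (2 : ℝ) * ((l N : ℝ) / N) ≤
        (pairCount x s2 N : ℝ) / N - (pairCount x s1 N : ℝ) / N := by
      rw [div_sub_div_same, ← mul_div_assoc]
      gcongr
      linarith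
    linarith
  -- take δ → 0 and contradict ε > 0
  have hseq : Tendsto (fun k : ℕ => (1:ℝ) / (k + 1)) atTop (nhds 0) :=
    tendsto_one_div_add_atTop_nhds_zero_nat
  set a : ℕ → ℝ := fun k => t + 1 / (k + 1) with ha_def
  set b : ℕ → ℝ := fun k => max (t - 1 / (k + 1)) 0 with hb_def
  have ha : Tendsto a atTop (nhds t) := by
    simpa [ha_def, one_div] using hseq.const_add t
  have hb : Tendsto b atTop (nhds t) := by
    have h1 := (hseq.const_sub t).max (tendsto_const_nhds (x := (0:ℝ)))
    simpa [hb_def, one_div, max_eq_left ht0] using h1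
  have hta : Tendsto a atTop (nhdsWithin t (Ici 0)) := by
    rw [tendsto_nhdsWithin_iff]
    exact ⟨ha, Filter.Eventually.of_forall fun k => by
      simp only [ha_def, mem_Ici]; positivity⟩
  have htb : Tendsto b atTop (nhdsWithin t (Ici 0)) := by
    rw [tendsto_nhdsWithin_iff]
    exact ⟨hb, Filter.Eventually.of_forall fun k => show (0:ℝ) ≤ b k from le_max_right _ _⟩
  have hfa : Tendsto (fun k => f (a k)) atTop (nhds (f t)) :=
    (hf_cont t ht0).tendsto.comp hta
  have hfb : Tendsto (fun k => f (b k)) atTop (nhds (f t)) :=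
    (hf_cont t ht0).tendsto.comp htb
  have hdiff2 : Tendsto (fun k => f (a k) - f (b k)) atTop (nhds 0) := by
    simpa using hfa.sub hfb
  have hfin : 2 * ε ≤ 0 :=
    ge_of_tendsto' hdiff2 fun k => hge (1 / (k + 1)) (by positivity)
  linarith
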